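/- Let G be an r-uniform κ-spread hypergraph on Y (all edges of size exactly r). Then for an α-random subset Y_α of Y, the Janson quantity Λ := Σ_i Σ_j {E[1_{S_i⊆Y_α} 1_{S_j⊆Y_α}] : S_i ∩ S_j ≠ ∅} satisfies Λ ≤ μ² · Σ_{t=1}^{r} C(r,t)(ακ)^{−t}, where μ = |G| α^r. -/

import Mathlib

open Finset

/-- For an `r`-uniform `κ`-spread hypergraph with edges `H j` (`j : ι`) on `Y` and an
`α`-random subset `Y_α`, the Janson quantity
`Λ = ∑_{i,j : H i ∩ H j ≠ ∅} P(H i ∪ H j ⊆ Y_α)` satisfies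
`Λ ≤ μ² ∑_{t=1}^r C(r,t)(ακ)^{-t}` where `μ = |ι| α^r`. -/
theorem stmt8 {Y ι : Type*} [Fintype Y] [DecidableEq Y] [Fintype ι]
    (H : ι → Finset Y) (r : ℕ) (κ : ℝ) (hκ : 0 < κ)
    (α : ℝ) (hα0 : 0 ≤ α) (hα1 : α ≤ 1)
    (huni : ∀ j, (H j).card = r)
    (hspread : ∀ S : Finset Y,
      ((Finset.univ.filter (fun j : ι => S ⊆ H j)).card : ℝ) ≤ κ⁻¹ ^ S.card * Fintype.card ι) :
    (∑ j : ι, ∑ k : ι,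
        if ((H j) ∩ (H k)).Nonempty then α ^ ((H j) ∪ (H k)).card else 0)
      ≤ ((Fintype.card ι : ℝ) * α ^ r) ^ 2
          * ∑ t ∈ Finset.Icc 1 r, (r.choose t : ℝ) * ((α * κ)⁻¹) ^ t := by
  classical
  set n : ℝ := (Fintype.card ι : ℝ) with hn
  have hn0 : 0 ≤ n := by positivity
  rcases eq_or_lt_of_le hα0 with h0 | hαpos
  · have hL : (∑ j : ι, ∑ k : ι,
        if ((H j) ∩ (H k)).Nonempty then α ^ ((H j) ∪ (H k)).card else 0) = 0 := by
      refine Finset.sum_eq_zero fun j _ => Finset.sum_eq_zero fun k _ => ?_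
      split_ifs with h
      · have hne : ((H j) ∪ (H k)).Nonempty := h.mono (Finset.inter_subset_union)
        rw [← h0]
        exact zero_pow (Finset.card_pos.mpr hne).ne'
      · rfl
    rw [hL]
    have h1 : (0:ℝ) ≤ (n * α ^ r) ^ 2 := by positivity
    have h2 : (0:ℝ) ≤ ∑ t ∈ Finset.Icc 1 r, (r.choose t : ℝ) * ((α * κ)⁻¹) ^ t := by
      refine Finset.sum_nonneg fun t _ => ?_
      have : (0:ℝ) ≤ (α * κ)⁻¹ := by positivity
      positivity
    exact mul_nonneg h1 h2
  · -- α > 0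
    have hcard : ∀ j k : ι, ((H j) ∩ (H k)).Nonempty →
        ((H j) ∪ (H k)).card = 2 * r - ((H j) ∩ (H k)).card := by
      intro j k _
      have h := Finset.card_union_add_card_inter (H j) (H k)
      have h1 := huni j; have h2 := huni k
      omega
    have step1 : (∑ j : ι, ∑ k : ι,
        if ((H j) ∩ (H k)).Nonempty then α ^ ((H j) ∪ (H k)).card else 0)
        ≤ ∑ j : ι, ∑ t ∈ Finset.Icc 1 r, ∑ S ∈ (H j).powersetCard t, ∑ k : ι,
            (if S ⊆ H k then α ^ (2 * r - t) else 0) := by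
      refine Finset.sum_le_sum fun j _ => ?_
      have hswap : (∑ t ∈ Finset.Icc 1 r, ∑ S ∈ (H j).powersetCard t, ∑ k : ι,
            (if S ⊆ H k then α ^ (2 * r - t) else 0))
          = ∑ k : ι, ∑ t ∈ Finset.Icc 1 r, ∑ S ∈ (H j).powersetCard t,
            (if S ⊆ H k then α ^ (2 * r - t) else 0) := by
        calc (∑ t ∈ Finset.Icc 1 r, ∑ S ∈ (H j).powersetCard t, ∑ k : ι,
            (if S ⊆ H k then α ^ (2 * r - t) else 0))
            = ∑ t ∈ Finset.Icc 1 r, ∑ k : ι, ∑ S ∈ (H j).powersetCard t,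
              (if S ⊆ H k then α ^ (2 * r - t) else 0) :=
              Finset.sum_congr rfl fun t _ => Finset.sum_comm
          _ = _ := Finset.sum_comm
      rw [hswap]
      refine Finset.sum_le_sum fun k _ => ?_
      by_cases h : ((H j) ∩ (H k)).Nonempty
      · rw [if_pos h]
        set t₀ := ((H j) ∩ (H k)).card with ht₀
        have ht₀1 : 1 ≤ t₀ := Finset.card_pos.mpr h
        have ht₀r : t₀ ≤ r := by
          rw [← huni j]; exact Finset.card_le_card Finset.inter_subset_left
        have ht₀mem : t₀ ∈ Finset.Icc 1 r := Finset.mem_Icc.mpr ⟨ht₀1, ht₀r⟩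
        have hS₀mem : (H j) ∩ (H k) ∈ (H j).powersetCard t₀ :=
          Finset.mem_powersetCard.mpr ⟨Finset.inter_subset_left, rfl⟩
        have hcc := hcard j k h
        rw [hcc]
        have h1 : α ^ (2 * r - t₀) ≤ ∑ S ∈ (H j).powersetCard t₀,
            (if S ⊆ H k then α ^ (2 * r - t₀) else 0) := by
          have := Finset.single_le_sum
            (f := fun S => if S ⊆ H k then α ^ (2 * r - t₀) else 0)
            (fun S _ => by beta_reduce; split_ifs <;> positivity) hS₀mem
          simpa [Finset.inter_subset_right] using this
        refine h1.trans ?_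
        exact Finset.single_le_sum
          (f := fun t => ∑ S ∈ (H j).powersetCard t, (if S ⊆ H k then α ^ (2 * r - t) else 0))
          (fun t _ => Finset.sum_nonneg fun S _ => by beta_reduce; split_ifs <;> positivity)
          ht₀mem
      · rw [if_neg h]
        refine Finset.sum_nonneg fun t _ => Finset.sum_nonneg fun S _ => by
          split_ifs <;> positivity
    have step2 : (∑ j : ι, ∑ t ∈ Finset.Icc 1 r, ∑ S ∈ (H j).powersetCard t, ∑ k : ι,
            (if S ⊆ H k then α ^ (2 * r - t) else 0))
        ≤ ∑ j : ι, ∑ t ∈ Finset.Icc 1 r,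
            (r.choose t : ℝ) * (κ⁻¹ ^ t * n * α ^ (2 * r - t)) := by
      refine Finset.sum_le_sum fun j _ => Finset.sum_le_sum fun t _ => ?_
      have hbound : ∀ S ∈ (H j).powersetCard t,
          (∑ k : ι, (if S ⊆ H k then α ^ (2 * r - t) else 0))
            ≤ κ⁻¹ ^ t * n * α ^ (2 * r - t) := by
        intro S hS
        obtain ⟨-, hScard⟩ := Finset.mem_powersetCard.mp hS
        have : (∑ k : ι, (if S ⊆ H k then α ^ (2 * r - t) else 0))
            = ((Finset.univ.filter (fun k : ι => S ⊆ H k)).card : ℝ) * α ^ (2 * r - t) := by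
          rw [← Finset.sum_filter, Finset.sum_const, nsmul_eq_mul]
        rw [this]
        have hsp := hspread S
        rw [hScard] at hsp
        exact mul_le_mul_of_nonneg_right hsp (by positivity)
      calc (∑ S ∈ (H j).powersetCard t, ∑ k : ι, (if S ⊆ H k then α ^ (2 * r - t) else 0))
          ≤ ∑ S ∈ (H j).powersetCard t, κ⁻¹ ^ t * n * α ^ (2 * r - t) :=
            Finset.sum_le_sum hbound
        _ = ((H j).powersetCard t).card * (κ⁻¹ ^ t * n * α ^ (2 * r - t)) := by
            rw [Finset.sum_const, nsmul_eq_mul]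
        _ = (r.choose t : ℝ) * (κ⁻¹ ^ t * n * α ^ (2 * r - t)) := by
            rw [Finset.card_powersetCard, huni j]
    refine (step1.trans step2).trans (le_of_eq ?_)
    rw [Finset.sum_const, nsmul_eq_mul, Finset.mul_sum, Finset.mul_sum]
    refine Finset.sum_congr rfl fun t ht => ?_
    obtain ⟨ht1, htr⟩ := Finset.mem_Icc.mp ht
    have htle : t ≤ 2 * r := by omega
    have hαne : α ≠ 0 := ne_of_gt hαpos
    rw [pow_sub₀ α hαne htle]
    have hκne : κ ≠ 0 := ne_of_gt hκ
    rw [Finset.card_univ, ← hn, mul_inv, mul_pow, mul_pow, inv_pow, inv_pow]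
    field_simp
    ring
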